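/- For every r ∈ (1,∞) there exists a sequence s : {1,2,...} → ℕ with s_1 ∈ {1,2} and s_{k+1} ∈ {s_k, 2·s_k} for all k ≥ 1 (the shell sizes of an unweighted 1-2 radially symmetric tree), such that for every p ∈ (1,∞): the series Σ_{k≥1} s_k^{-1/(p−1)} converges if and only if p < r. Consequently, M_p(1,s) > 0 if and only if 1 < p < r, so the critical exponent p_c := sup{ p > 1 : M_p(1,s) > 0 } equals r. (One may take s determined by the skip sequence c_k = ⌈2^{k/(r−1)}⌉.) -/

import Mathlib

open scoped ENNReal NNReal

/-- The radially symmetric `p`-modulus `M_p(σ, s)` of the family of infinite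
descending paths in a radially symmetric infinite tree whose `k`-th shell has
`s k` edges, each of weight `σ k`: the infimum of the `p`-energies
`Σ_k s_k σ_k ρ_k^p` over all densities `ρ` with `Σ_k ρ_k ≥ 1`. -/
noncomputable def Mmod (p : ℝ) (σ : ℕ → ℝ≥0) (s : ℕ → ℕ) : ℝ≥0∞ :=
  ⨅ ρ ∈ {ρ : ℕ → ℝ≥0 | 1 ≤ ∑' k : ℕ, (ρ k : ℝ≥0∞)},
    ∑' k : ℕ, (s k : ℝ≥0∞) * (σ k : ℝ≥0∞) * (ρ k : ℝ≥0∞) ^ p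

open Real MeasureTheory

lemma mmod_pos_of_ne_top {p : ℝ} (hp : 1 < p) {s : ℕ → ℕ} (hs : ∀ k, 1 ≤ s k)
    (hT : (∑' k : ℕ, (s k : ℝ≥0∞) ^ (-(1 / (p - 1)))) ≠ ⊤) :
    0 < Mmod p (fun _ => 1) s := by
  have hp0 : (0:ℝ) < p := by linarith
  have hp1 : p - 1 ≠ 0 := by linarith
  set q : ℝ := 1 / (p - 1) with hq
  set T : ℝ≥0∞ := ∑' k : ℕ, (s k : ℝ≥0∞) ^ (-q) with hTdef
  have hsne : ∀ k, (s k : ℝ≥0∞) ≠ 0 := by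
    intro k; exact Nat.cast_ne_zero.mpr (Nat.one_le_iff_ne_zero.mp (hs k))
  have hstop : ∀ k, (s k : ℝ≥0∞) ≠ ⊤ := fun k => ENNReal.natCast_ne_top _
  have hT0 : 0 < T := by
    refine lt_of_lt_of_le ?_ (ENNReal.le_tsum 0)
    exact ENNReal.rpow_pos (pos_iff_ne_zero.mpr (hsne 0)) (hstop 0)
  have hTpow_pos : 0 < T ^ (1 - p) := ENNReal.rpow_pos hT0 hT
  refine lt_of_lt_of_le hTpow_pos ?_
  rw [Mmod]
  refine le_iInf₂ fun ρ hρ => ?_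
  simp only [Set.mem_setOf_eq] at hρ
  set E : ℝ≥0∞ := ∑' k : ℕ, (s k : ℝ≥0∞) * (ρ k : ℝ≥0∞) ^ p with hE
  have hEeq : (∑' k : ℕ, (s k : ℝ≥0∞) * ((1:ℝ≥0) : ℝ≥0∞) * (ρ k : ℝ≥0∞) ^ p) = E := by
    simp [hE]
  rw [hEeq]
  -- Hölder
  have hpq : p.HolderConjugate (p / (p - 1)) := Real.HolderConjugate.conjExponent hp
  have holder := ENNReal.lintegral_mul_le_Lp_mul_Lq (Measure.count : Measure ℕ) hpq
    (f := fun k => (s k : ℝ≥0∞) ^ (1/p) * (ρ k : ℝ≥0∞))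
    (g := fun k => (s k : ℝ≥0∞) ^ (-(1/p)))
    (measurable_of_countable _).aemeasurable (measurable_of_countable _).aemeasurable
  rw [lintegral_count, lintegral_count, lintegral_count] at holder
  have e1 : (∑' k : ℕ, ((fun k => (s k : ℝ≥0∞) ^ (1/p) * (ρ k : ℝ≥0∞)) *
      (fun k => (s k : ℝ≥0∞) ^ (-(1/p)))) k) = ∑' k : ℕ, (ρ k : ℝ≥0∞) := by
    refine tsum_congr fun k => ?_
    show (s k : ℝ≥0∞) ^ (1/p) * (ρ k : ℝ≥0∞) * (s k : ℝ≥0∞) ^ (-(1/p)) = (ρ k : ℝ≥0∞)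
    calc (s k : ℝ≥0∞) ^ (1/p) * (ρ k : ℝ≥0∞) * (s k : ℝ≥0∞) ^ (-(1/p))
        = (s k : ℝ≥0∞) ^ (1/p) * (s k : ℝ≥0∞) ^ (-(1/p)) * (ρ k : ℝ≥0∞) := by ring
      _ = (s k : ℝ≥0∞) ^ ((1/p) + (-(1/p))) * (ρ k : ℝ≥0∞) := by
          rw [ENNReal.rpow_add _ _ (hsne k) (hstop k)]
      _ = (ρ k : ℝ≥0∞) := by
          rw [show (1/p) + (-(1/p)) = (0:ℝ) by ring, ENNReal.rpow_zero, one_mul]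
  have e2 : (∑' k : ℕ, ((fun k => (s k : ℝ≥0∞) ^ (1/p) * (ρ k : ℝ≥0∞)) k) ^ p) = E := by
    refine tsum_congr fun k => ?_
    show ((s k : ℝ≥0∞) ^ (1/p) * (ρ k : ℝ≥0∞)) ^ p = _
    rw [ENNReal.mul_rpow_of_nonneg _ _ hp0.le, ← ENNReal.rpow_mul,
      one_div, inv_mul_cancel₀ hp0.ne', ENNReal.rpow_one]
  have e3 : (∑' k : ℕ, ((fun k => (s k : ℝ≥0∞) ^ (-(1/p))) k) ^ (p/(p-1))) = T := by
    refine tsum_congr fun k => ?_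
    show ((s k : ℝ≥0∞) ^ (-(1/p))) ^ (p/(p-1)) = _
    rw [← ENNReal.rpow_mul]
    congr 1
    rw [hq]
    field_simp
  rw [e1, e2, e3] at holder
  have h1 : (1:ℝ≥0∞) ≤ E ^ (1/p) * T ^ (1/(p/(p-1))) := le_trans hρ holder
  have hexp : 1/(p/(p-1)) = (p-1)/p := by
    rw [one_div_div]
  rw [hexp] at h1
  have h2 : T ^ ((1-p)/p) ≤ E ^ (1/p) := by
    have h4 := mul_le_mul_left h1 (T ^ ((1-p)/p))
    rw [one_mul, mul_assoc, ← ENNReal.rpow_add _ _ hT0.ne' hT,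
      show (p-1)/p + (1-p)/p = (0:ℝ) by ring, ENNReal.rpow_zero, mul_one] at h4
    exact h4
  have h3 := ENNReal.rpow_le_rpow h2 hp0.le
  rw [← ENNReal.rpow_mul, ← ENNReal.rpow_mul,
    div_mul_cancel₀ _ hp0.ne', one_div, inv_mul_cancel₀ hp0.ne', ENNReal.rpow_one] at h3
  exact h3

lemma mmod_eq_zero_of_eq_top {p : ℝ} (hp : 1 < p) {s : ℕ → ℕ} (hs : ∀ k, 1 ≤ s k)
    (hT : (∑' k : ℕ, (s k : ℝ≥0∞) ^ (-(1 / (p - 1)))) = ⊤) :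
    Mmod p (fun _ => 1) s = 0 := by
  have hp0 : (0:ℝ) < p := by linarith
  set q : ℝ := 1 / (p - 1) with hq
  -- the NNReal weights
  set t : ℕ → ℝ≥0 := fun k => (s k : ℝ≥0) ^ (-q) with ht
  have hsne : ∀ k, (s k : ℝ≥0) ≠ 0 := by
    intro k; exact Nat.cast_ne_zero.mpr (Nat.one_le_iff_ne_zero.mp (hs k))
  have hcoe : ∀ k, ((t k : ℝ≥0) : ℝ≥0∞) = (s k : ℝ≥0∞) ^ (-q) := by
    intro k
    rw [ht, ENNReal.coe_rpow_of_ne_zero (hsne k)]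
    norm_cast
  -- key estimate: for any finset F with positive sum S, Mmod ≤ S^(1-p)
  have key : ∀ F : Finset ℕ, F.Nonempty →
      Mmod p (fun _ => 1) s ≤ ((∑ k ∈ F, t k : ℝ≥0) : ℝ≥0∞) ^ (1 - p) := by
    intro F hF
    set S : ℝ≥0 := ∑ k ∈ F, t k with hS
    have hS0 : S ≠ 0 := by
      have : 0 < S := Finset.sum_pos (fun k _ => NNReal.rpow_pos
        (pos_iff_ne_zero.mpr (hsne k))) hF
      exact this.ne'
    set ρ : ℕ → ℝ≥0 := fun k => if k ∈ F then t k / S else 0 with hρdef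
    have hzero : ∀ k ∉ F, ((ρ k : ℝ≥0) : ℝ≥0∞) = 0 := by
      intro k hk; simp [hρdef, hk]
    have hmem : 1 ≤ ∑' k : ℕ, ((ρ k : ℝ≥0) : ℝ≥0∞) := by
      rw [tsum_eq_sum hzero]
      have : ∑ k ∈ F, ((ρ k : ℝ≥0) : ℝ≥0∞) = ((∑ k ∈ F, ρ k : ℝ≥0) : ℝ≥0∞) := by
        rw [ENNReal.coe_finset_sum]
      rw [this]
      have : ∑ k ∈ F, ρ k = 1 := by
        have : ∑ k ∈ F, ρ k = (∑ k ∈ F, t k) / S := by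
          rw [Finset.sum_div]
          exact Finset.sum_congr rfl fun k hk => by simp [hρdef, hk]
        rw [this, ← hS, div_self hS0]
      rw [this]; norm_num
    -- energy computation
    have henergy : (∑' k : ℕ, (s k : ℝ≥0∞) * ((1:ℝ≥0) : ℝ≥0∞) * ((ρ k : ℝ≥0) : ℝ≥0∞) ^ p)
        = ((S : ℝ≥0) : ℝ≥0∞) ^ (1 - p) := by
      have hzero' : ∀ k ∉ F, (s k : ℝ≥0∞) * ((1:ℝ≥0) : ℝ≥0∞) * ((ρ k : ℝ≥0) : ℝ≥0∞) ^ p = 0 := by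
        intro k hk
        rw [hzero k hk, ENNReal.zero_rpow_of_pos hp0, mul_zero]
      rw [tsum_eq_sum hzero']
      have hterm : ∀ k ∈ F, (s k : ℝ≥0∞) * ((1:ℝ≥0) : ℝ≥0∞) * ((ρ k : ℝ≥0) : ℝ≥0∞) ^ p
          = ((t k : ℝ≥0) : ℝ≥0∞) * ((S : ℝ≥0∞) ^ p)⁻¹ := by
        intro k hk
        have hρk : ((ρ k : ℝ≥0) : ℝ≥0∞) = ((t k : ℝ≥0) : ℝ≥0∞) / (S : ℝ≥0∞) := by
          simp [hρdef, hk, ENNReal.coe_div hS0]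
        rw [hρk]
        rw [ENNReal.div_rpow_of_nonneg _ _ hp0.le]
        have htk : ((t k : ℝ≥0) : ℝ≥0∞) ^ p = (s k : ℝ≥0∞) ^ (-q * p) := by
          rw [hcoe k, ← ENNReal.rpow_mul]
        have hsk : (s k : ℝ≥0∞) * (s k : ℝ≥0∞) ^ (-q * p) = ((t k : ℝ≥0) : ℝ≥0∞) := by
          rw [hcoe k]
          have : (s k : ℝ≥0∞) * (s k : ℝ≥0∞) ^ (-q * p) = (s k : ℝ≥0∞) ^ (1 + -q * p) := by
            rw [ENNReal.rpow_add _ _ (by exact_mod_cast hsne k) (ENNReal.natCast_ne_top _),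
              ENNReal.rpow_one]
          rw [this]
          congr 1
          have hqp : q * (p - 1) = 1 := by
            rw [hq]; exact one_div_mul_cancel (by linarith)
          linear_combination -hqp
        rw [ENNReal.coe_one, mul_one, div_eq_mul_inv, ← mul_assoc, htk, hsk]
      rw [Finset.sum_congr rfl hterm, ← Finset.sum_mul, ← ENNReal.coe_finset_sum, ← hS]
      rw [show (1:ℝ) - p = 1 + (-p) by ring,
        ENNReal.rpow_add _ _ (by exact_mod_cast hS0) ENNReal.coe_ne_top,
        ENNReal.rpow_one, ENNReal.rpow_neg]
    calc Mmod p (fun _ => 1) s ≤ ∑' k : ℕ, (s k : ℝ≥0∞) * ((1:ℝ≥0) : ℝ≥0∞) * ((ρ k : ℝ≥0) : ℝ≥0∞) ^ p := by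
          rw [Mmod]
          exact iInf₂_le ρ hmem
      _ = _ := henergy
  -- the finset sums are unbounded
  have hsum_top : (∑' k : ℕ, ((t k : ℝ≥0) : ℝ≥0∞)) = ⊤ := (tsum_congr hcoe).trans hT
  refine le_antisymm ?_ (zero_le)
  refine ENNReal.le_of_forall_pos_le_add fun e he _ => ?_
  set A : ℝ≥0 := e⁻¹ ^ (1/(p-1)) with hA
  have hA0 : 0 < A := NNReal.rpow_pos (by positivity)
  obtain ⟨F, hF⟩ : ∃ F : Finset ℕ, (A : ℝ≥0∞) < ∑ k ∈ F, ((t k : ℝ≥0) : ℝ≥0∞) := by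
    have h1 : (A : ℝ≥0∞) < ⨆ F : Finset ℕ, ∑ k ∈ F, ((t k : ℝ≥0) : ℝ≥0∞) := by
      rw [← ENNReal.tsum_eq_iSup_sum, hsum_top]
      exact ENNReal.coe_lt_top
    exact lt_iSup_iff.mp h1
  set S : ℝ≥0 := ∑ k ∈ F, t k with hS
  have hScoe : ((S : ℝ≥0) : ℝ≥0∞) = ∑ k ∈ F, ((t k : ℝ≥0) : ℝ≥0∞) := ENNReal.coe_finset_sum F t
  have hAS : A < S := by
    rw [← ENNReal.coe_lt_coe, hScoe]; exact hF
  have hFne : F.Nonempty := by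
    rw [Finset.nonempty_iff_ne_empty]
    rintro rfl
    simp only [Finset.sum_empty, hS] at hAS
    exact absurd hAS (not_lt.mpr hA0.le)
  have hS0 : S ≠ 0 := (hA0.trans hAS).ne'
  have hbound : S ^ ((1:ℝ) - p) ≤ e := by
    have h2 : e⁻¹ < S ^ (p - 1) := by
      have h3 : A ^ (p - 1) < S ^ (p - 1) := NNReal.rpow_lt_rpow hAS (by linarith)
      have h4 : A ^ (p - 1) = e⁻¹ := by
        rw [hA, ← NNReal.rpow_mul, one_div, inv_mul_cancel₀ (by linarith : p - (1:ℝ) ≠ 0),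
          NNReal.rpow_one]
      rwa [h4] at h3
    have h5 : (S ^ ((p:ℝ) - 1))⁻¹ ≤ (e⁻¹)⁻¹ := by gcongr
    rw [inv_inv] at h5
    rw [show (1:ℝ) - p = -(p - 1) by ring, NNReal.rpow_neg]
    exact h5
  calc Mmod p (fun _ => 1) s ≤ ((S : ℝ≥0) : ℝ≥0∞) ^ ((1:ℝ) - p) := key F hFne
    _ = ((S ^ ((1:ℝ) - p) : ℝ≥0) : ℝ≥0∞) := by
        rw [ENNReal.coe_rpow_of_ne_zero hS0]
    _ ≤ ((e : ℝ≥0) : ℝ≥0∞) := ENNReal.coe_le_coe.mpr hbound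
    _ = 0 + e := (zero_add _).symm

lemma series_construction (r : ℝ) (hr : 1 < r) :
    ∃ s : ℕ → ℕ,
      s 0 = 1 ∧
      (∀ k, s (k+1) = s k ∨ s (k+1) = 2 * s k) ∧
      (∀ k, 1 ≤ s k) ∧
      (∀ p : ℝ, 1 < p →
        ((∑' k : ℕ, (s k : ℝ≥0∞) ^ (-(1 / (p - 1)))) ≠ ⊤ ↔ p < r)) := by
  set α : ℝ := r - 1 with hα
  have hα0 : 0 < α := by rw [hα]; linarith
  set b : ℝ := (2:ℝ) ^ (α⁻¹) with hb
  have hb1 : 1 < b := by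
    rw [hb]
    have := Real.one_lt_rpow_iff_of_pos (show (0:ℝ) < 2 by norm_num) (y := α⁻¹)
    rw [this]
    left
    exact ⟨by norm_num, inv_pos.mpr hα0⟩
  obtain ⟨m, hm⟩ := exists_nat_one_div_lt (show (0:ℝ) < b - 1 by linarith)
  set M : ℕ := m + 1 with hM
  have hM0 : (0:ℝ) < M := by positivity
  have hM1 : (1:ℝ) ≤ M := by exact_mod_cast Nat.one_le_iff_ne_zero.mpr (by omega)
  have hMb : ((M:ℝ) + 1)/M < b := by
    have h1 : (1:ℝ)/M < b - 1 := by
      have : ((M:ℝ)) = (m:ℝ) + 1 := by push_cast [hM]; ring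
      rw [this]; exact hm
    rw [add_div, div_self hM0.ne']
    linarith
  -- the building data
  set y : ℕ → ℝ := fun k => ((k:ℝ) + M)/M with hy
  have hy_pos : ∀ k, 0 < y k := by
    intro k; rw [hy]; positivity
  have hy_one : ∀ k, 1 ≤ y k := by
    intro k
    rw [hy]
    rw [le_div_iff₀ hM0, one_mul]
    have : (0:ℝ) ≤ (k:ℝ) := Nat.cast_nonneg k
    linarith
  set x : ℕ → ℝ := fun k => α * logb 2 (y k) with hx
  have hx_nonneg : ∀ k, 0 ≤ x k := by
    intro k
    exact mul_nonneg hα0.le (logb_nonneg one_lt_two (hy_one k))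
  have hy_mono : ∀ k, y k ≤ y (k+1) := by
    intro k
    show ((k:ℝ) + M)/M ≤ (((k+1:ℕ):ℝ) + M)/M
    push_cast
    gcongr
    linarith
  have hx_mono : ∀ k, x k ≤ x (k+1) := by
    intro k
    rw [hx]
    have h1 : logb 2 (y k) ≤ logb 2 (y (k+1)) :=
      logb_le_logb_of_le one_lt_two (hy_pos k) (hy_mono k)
    exact mul_le_mul_of_nonneg_left h1 hα0.le
  have hx_step : ∀ k, x (k+1) ≤ x k + 1 := by
    intro k
    have hyk : y k ≠ 0 := (hy_pos k).ne'
    have hfrac_pos : (0:ℝ) < ((k:ℝ) + 1 + M)/((k:ℝ) + M) := by positivity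
    have e : y (k+1) = y k * (((k:ℝ) + 1 + M)/((k:ℝ) + M)) := by
      rw [hy]
      push_cast
      rw [div_mul_div_comm]
      rw [div_eq_div_iff (by positivity) (by positivity)]
      ring
    have hfrac_le : ((k:ℝ) + 1 + M)/((k:ℝ) + M) ≤ b := by
      have h2 : ((k:ℝ) + 1 + M)/((k:ℝ) + M) ≤ ((M:ℝ) + 1)/M := by
        rw [div_le_div_iff₀ (by positivity) hM0]
        nlinarith [Nat.cast_nonneg (α := ℝ) k]
      linarith
    have h3 : logb 2 (((k:ℝ) + 1 + M)/((k:ℝ) + M)) ≤ α⁻¹ := by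
      calc logb 2 (((k:ℝ) + 1 + M)/((k:ℝ) + M)) ≤ logb 2 b :=
            logb_le_logb_of_le one_lt_two hfrac_pos hfrac_le
        _ = α⁻¹ := by rw [hb, logb_rpow (by norm_num) (by norm_num)]
    rw [hx]
    show α * logb 2 (y (k+1)) ≤ α * logb 2 (y k) + 1
    rw [e, logb_mul hyk hfrac_pos.ne', mul_add]
    have h4 : α * logb 2 (((k:ℝ) + 1 + M)/((k:ℝ) + M)) ≤ 1 := by
      calc α * logb 2 (((k:ℝ) + 1 + M)/((k:ℝ) + M)) ≤ α * α⁻¹ :=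
            mul_le_mul_of_nonneg_left h3 hα0.le
        _ = 1 := mul_inv_cancel₀ hα0.ne'
    linarith
  -- the integer data
  set n : ℕ → ℕ := fun k => ⌊x k⌋₊ with hn
  have hn_mono : ∀ k, n k ≤ n (k+1) := fun k => Nat.floor_le_floor (hx_mono k)
  have hn_step : ∀ k, n (k+1) ≤ n k + 1 := by
    intro k
    calc n (k+1) ≤ ⌊x k + 1⌋₊ := Nat.floor_le_floor (hx_step k)
      _ = n k + 1 := Nat.floor_add_one (hx_nonneg k)
  have hn_le : ∀ k, (n k : ℝ) ≤ x k := fun k => Nat.floor_le (hx_nonneg k)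
  have hn_gt : ∀ k, x k - 1 < n k := by
    intro k
    have := Nat.lt_floor_add_one (x k)
    rw [hn]
    push_cast
    linarith [Nat.lt_floor_add_one (x k)]
  refine ⟨fun k => 2 ^ (n k), ?_, ?_, ?_, ?_⟩
  · -- s 0 = 1
    have hy0 : y 0 = 1 := by
      show (((0:ℕ):ℝ) + M)/M = 1
      rw [Nat.cast_zero, zero_add, div_self hM0.ne']
    have hx0 : x 0 = 0 := by
      show α * logb 2 (y 0) = 0
      rw [hy0, logb_one, mul_zero]
    have hn0 : n 0 = 0 := by
      show ⌊x 0⌋₊ = 0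
      rw [hx0]; exact Nat.floor_zero
    show 2 ^ (n 0) = 1
    rw [hn0, pow_zero]
  · intro k
    rcases (show n (k+1) = n k ∨ n (k+1) = n k + 1 by
      have := hn_mono k; have := hn_step k; omega) with h | h
    · left; show 2 ^ (n (k+1)) = 2 ^ (n k); rw [h]
    · right; show 2 ^ (n (k+1)) = 2 * 2 ^ (n k); rw [h, pow_succ]; ring
  · intro k; exact Nat.one_le_two_pow
  · intro p hp
    have hp1 : (0:ℝ) < p - 1 := by linarith
    set q : ℝ := 1/(p-1) with hq
    have hq0 : 0 < q := by positivity
    set t : ℝ := q * α with htdef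
    have ht0 : 0 < t := mul_pos hq0 hα0
    have hiff : 1 < t ↔ p < r := by
      rw [htdef, hq, hα, div_mul_eq_mul_div, one_mul, lt_div_iff₀ hp1, one_mul]
      constructor <;> intro h <;> linarith
    rw [← hiff]
    have hterm : ∀ k : ℕ, ((2 ^ (n k) : ℕ) : ℝ≥0∞) ^ (-q)
        = ((((2 ^ (n k) : ℕ) : ℝ≥0) ^ (-q) : ℝ≥0) : ℝ≥0∞) := by
      intro k
      rw [← ENNReal.coe_natCast, ENNReal.coe_rpow_of_ne_zero (by positivity)]
    have step1 : (∑' k : ℕ, ((2 ^ (n k) : ℕ) : ℝ≥0∞) ^ (-q)) ≠ ⊤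
        ↔ Summable (fun k => (((2 ^ (n k) : ℕ) : ℝ≥0) ^ (-q) : ℝ≥0)) := by
      rw [tsum_congr hterm]
      exact ENNReal.tsum_coe_ne_top_iff_summable
    rw [step1, ← NNReal.summable_coe]
    have hw : ∀ k, ((((2 ^ (n k) : ℕ) : ℝ≥0) ^ (-q) : ℝ≥0) : ℝ) = (2:ℝ) ^ ((n k : ℝ) * (-q)) := by
      intro k
      rw [NNReal.coe_rpow]
      push_cast
      rw [← Real.rpow_natCast 2 (n k), ← Real.rpow_mul (by norm_num)]
    rw [summable_congr hw]
    -- main estimates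
    have hxk : ∀ k, (2:ℝ) ^ (x k * (-q)) = y k ^ (-t) := by
      intro k
      have hxe : x k * (-q) = logb 2 (y k) * (-t) := by
        show (α * logb 2 (y k)) * (-q) = _
        rw [htdef]; ring
      rw [hxe, Real.rpow_mul (by norm_num), rpow_logb (by norm_num) (by norm_num) (hy_pos k)]
    have hlower : ∀ k, y k ^ (-t) ≤ (2:ℝ) ^ ((n k : ℝ) * (-q)) := by
      intro k
      rw [← hxk k]
      apply Real.rpow_le_rpow_of_exponent_le one_le_two
      nlinarith [hn_le k, hq0]
    have hupper : ∀ k, (2:ℝ) ^ ((n k : ℝ) * (-q)) ≤ (2:ℝ)^q * y k ^ (-t) := by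
      intro k
      have h1 : (2:ℝ) ^ ((n k : ℝ) * (-q)) ≤ (2:ℝ) ^ ((x k - 1) * (-q)) := by
        apply Real.rpow_le_rpow_of_exponent_le one_le_two
        nlinarith [hn_gt k, hq0]
      have h2 : (2:ℝ) ^ ((x k - 1) * (-q)) = (2:ℝ)^q * (2:ℝ)^(x k * (-q)) := by
        rw [← Real.rpow_add (by norm_num)]
        congr 1
        ring
      rw [h2, hxk k] at h1
      exact h1
    have hyf : ∀ k, y k ^ (-t) = (M:ℝ)^t * ((k:ℝ) + M) ^ (-t) := by
      intro k
      show (((k:ℝ) + M)/M) ^ (-t) = _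
      rw [Real.div_rpow (by positivity) hM0.le, div_eq_mul_inv,
        Real.rpow_neg hM0.le t, inv_inv, mul_comm]
    have hsummable_f : 1 < t → Summable (fun k : ℕ => ((k:ℝ) + M) ^ (-t)) := by
      intro ht
      have h0 : Summable (fun k : ℕ => ((k:ℝ)) ^ (-t)) := by
        refine (Real.summable_nat_rpow_inv.mpr ht).congr fun k => ?_
        rw [Real.rpow_neg (Nat.cast_nonneg k)]
      refine ((summable_nat_add_iff M).mpr h0).congr fun k => ?_
      push_cast
      ring_nf
    have hnot_f : t ≤ 1 → ¬ Summable (fun k : ℕ => ((k:ℝ) + M) ^ (-t)) := by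
      intro ht hsum
      have hle : ∀ k : ℕ, ((k:ℝ) + M)⁻¹ ≤ ((k:ℝ) + M) ^ (-t) := by
        intro k
        have h1 : ((k:ℝ) + M) ^ (-(1:ℝ)) ≤ ((k:ℝ) + M) ^ (-t) := by
          apply Real.rpow_le_rpow_of_exponent_le
          · have : (0:ℝ) ≤ (k:ℝ) := Nat.cast_nonneg k
            linarith
          · linarith
        rwa [Real.rpow_neg_one] at h1
      have h2 : Summable (fun k : ℕ => ((k:ℝ) + M)⁻¹) :=
        Summable.of_nonneg_of_le (fun k => by positivity) hle hsum
      have h3 : Summable (fun k : ℕ => (((k + M : ℕ)):ℝ)⁻¹) := by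
        refine h2.congr fun k => ?_
        push_cast
        ring_nf
      exact Real.not_summable_natCast_inv ((summable_nat_add_iff M).mp h3)
    constructor
    · intro hwsum
      by_contra hnot
      push_neg at hnot
      refine hnot_f hnot ?_
      have h5 : Summable (fun k => y k ^ (-t)) :=
        Summable.of_nonneg_of_le (fun k => by positivity) hlower hwsum
      refine (h5.mul_left ((M:ℝ)^t)⁻¹).congr fun k => ?_
      rw [hyf k, ← mul_assoc, inv_mul_cancel₀ (by positivity), one_mul]
    · intro ht
      refine Summable.of_nonneg_of_le (fun k => by positivity) hupper ?_
      refine ((hsummable_f ht).mul_left ((2:ℝ)^q * (M:ℝ)^t)).congr fun k => ?_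
      rw [hyf k]
      ring


/-- for every `r ∈ (1, ∞)` there is an unweighted 1-2 radially
symmetric tree (given by its shell sizes `s`) whose modulus series
`Σ_k s_k^{-1/(p-1)}` converges iff `p < r`; consequently `M_p(1,s) > 0` iff
`1 < p < r`, and the critical exponent equals `r`. (Here `s k` is the size of
the `(k+1)`-st shell.) -/
theorem stmt18 (r : ℝ) (hr : 1 < r) :
    ∃ s : ℕ → ℕ,
      (s 0 = 1 ∨ s 0 = 2) ∧
      (∀ k : ℕ, s (k + 1) = s k ∨ s (k + 1) = 2 * s k) ∧
      (∀ p : ℝ, 1 < p →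
        ((∑' k : ℕ, (s k : ℝ≥0∞) ^ (-(1 / (p - 1)))) ≠ ⊤ ↔ p < r)) ∧
      (∀ p : ℝ, 1 < p → (0 < Mmod p (fun _ => 1) s ↔ p < r)) ∧
      sSup {p : ℝ | 1 < p ∧ 0 < Mmod p (fun _ => 1) s} = r := by
  obtain ⟨s, hs0, hstep, hs1, hser⟩ := series_construction r hr
  have hmod : ∀ p : ℝ, 1 < p → (0 < Mmod p (fun _ => 1) s ↔ p < r) := by
    intro p hp
    constructor
    · intro hpos
      refine (hser p hp).mp ?_
      intro htop
      rw [mmod_eq_zero_of_eq_top hp hs1 htop] at hpos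
      exact lt_irrefl 0 hpos
    · intro hpr
      exact mmod_pos_of_ne_top hp hs1 ((hser p hp).mpr hpr)
  refine ⟨s, Or.inl hs0, hstep, hser, hmod, ?_⟩
  have hseteq : {p : ℝ | 1 < p ∧ 0 < Mmod p (fun _ => 1) s} = Set.Ioo 1 r := by
    ext p
    simp only [Set.mem_setOf_eq, Set.mem_Ioo]
    constructor
    · rintro ⟨hp, hpos⟩
      exact ⟨hp, (hmod p hp).mp hpos⟩
    · rintro ⟨hp, hpr⟩
      exact ⟨hp, (hmod p hp).mpr hpr⟩
  rw [hseteq]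
  exact csSup_Ioo hr
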